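/- The Dirac operator D_R := ∑_{n>0} √n ( id ⊗ dρ*(z̄ₙ) ⊗ γ(zₙ) + id ⊗ dρ*(zₙ) ⊗ γ(z̄ₙ) ) acting on L²(ΩT₀,τ)_fin ⊗ S_{ΩT₀,fin} satisfies the Weitzenböck-type formula D_R² = 2( id ⊗ id ⊗ N + id ⊗ (dρ*(d)/i) ⊗ id ), where N is the fermionic number operator and dρ*(d)/i is positive semi-definite. In particular D_R² is positive semi-definite. -/

import Mathlib

open scoped BigOperators ComplexConjugate

/-- Basis of `L²(ΩT₀,τ)_fin ⊗ S_{ΩT₀,fin} = L²(ℝ^∞)_fin ⊗ L²(ℝ^∞)*_fin ⊗ S_{ΩT₀,fin}`: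
a bosonic monomial, a dual bosonic monomial, and a fermionic wedge monomial. -/
abbrev TripleBasis : Type := (ℕ →₀ ℕ) × (ℕ →₀ ℕ) × Finset ℕ

/-- The space `L²(ΩT₀,τ)_fin ⊗ S_{ΩT₀,fin}`. -/
abbrev HSp : Type := TripleBasis →₀ ℂ

/-- `id ⊗ dρ*(zₙ) ⊗ id` (lowering on the dual Fock factor, with
`‖dρ*(zₙ)(z̄^k)‖² = kₙ‖z̄^k‖²` and `[dρ*(zₙ),dρ*(z̄ₙ)] = −id`). -/
noncomputable def dstarZ (n : ℕ) : HSp →ₗ[ℂ] HSp :=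
  Finsupp.lsum ℂ fun b =>
    LinearMap.toSpanSingleton ℂ HSp
      (((b.2.1 n : ℂ)) • Finsupp.single (b.1, b.2.1 - Finsupp.single n 1, b.2.2) 1)

/-- `id ⊗ dρ*(z̄ₙ) ⊗ id` (raising on the dual Fock factor). -/
noncomputable def dstarZbar (n : ℕ) : HSp →ₗ[ℂ] HSp :=
  Finsupp.lsum ℂ fun b =>
    LinearMap.toSpanSingleton ℂ HSp
      ((-1 : ℂ) • Finsupp.single (b.1, b.2.1 + Finsupp.single n 1, b.2.2) 1)

/-- The Koszul sign of inserting/removing `z̄ₙ` in the wedge monomial `s`. -/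
def ksgn (n : ℕ) (s : Finset ℕ) : ℂ := (-1 : ℂ) ^ (s.filter (· < n)).card

/-- `id ⊗ id ⊗ γ(zₙ)`, with `γ(zₙ) = −√2 (z̄ₙ ⌟ −)`. -/
noncomputable def GammaZ (n : ℕ) : HSp →ₗ[ℂ] HSp :=
  Finsupp.lsum ℂ fun b =>
    LinearMap.toSpanSingleton ℂ HSp
      (if n ∈ b.2.2 then
        ((-(Real.sqrt 2 : ℂ)) * ksgn n b.2.2) •
          Finsupp.single (b.1, b.2.1, b.2.2.erase n) 1
      else 0)

/-- `id ⊗ id ⊗ γ(z̄ₙ)`, with `γ(z̄ₙ) = √2 (z̄ₙ ∧ −)`. -/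
noncomputable def GammaZbar (n : ℕ) : HSp →ₗ[ℂ] HSp :=
  Finsupp.lsum ℂ fun b =>
    LinearMap.toSpanSingleton ℂ HSp
      (if n ∈ b.2.2 then 0
      else ((Real.sqrt 2 : ℂ) * ksgn n b.2.2) •
        Finsupp.single (b.1, b.2.1, insert n b.2.2) 1)

/-- The Dirac operator
`D_R = ∑_{n>0} √n (id ⊗ dρ*(z̄ₙ) ⊗ γ(zₙ) + id ⊗ dρ*(zₙ) ⊗ γ(z̄ₙ))`; the sum is
locally finite (on a basis vector only `n ∈ s` or `n ∈ supp q` contribute). -/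
noncomputable def DiracR : HSp →ₗ[ℂ] HSp :=
  Finsupp.lsum ℂ fun b =>
    LinearMap.toSpanSingleton ℂ HSp
      (∑ n ∈ b.2.1.support ∪ b.2.2, (Real.sqrt n : ℂ) •
        (dstarZbar n (GammaZ n (Finsupp.single b 1)) +
          dstarZ n (GammaZbar n (Finsupp.single b 1))))

/-- `id ⊗ id ⊗ N`, the fermionic number operator (eigenvalue `∑_{j∈s} j`). -/
noncomputable def NopH : HSp →ₗ[ℂ] HSp :=
  Finsupp.lsum ℂ fun b =>
    LinearMap.toSpanSingleton ℂ HSp (((∑ j ∈ b.2.2, j : ℕ) : ℂ) • Finsupp.single b 1)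

/-- `id ⊗ (dρ*(d)/i) ⊗ id`, the bosonic energy operator (eigenvalue `∑ⱼ j kⱼ`). -/
noncomputable def EopH : HSp →ₗ[ℂ] HSp :=
  Finsupp.lsum ℂ fun b =>
    LinearMap.toSpanSingleton ℂ HSp
      (((∑ j ∈ b.2.1.support, j * b.2.1 j : ℕ) : ℂ) • Finsupp.single b 1)

/-- The weight of a basis vector (its squared norm): `∏ kⱼ! · ∏ lⱼ! · 1`. -/
def wt (b : TripleBasis) : ℕ :=
  (∏ j ∈ b.1.support, (b.1 j).factorial) * (∏ j ∈ b.2.1.support, (b.2.1 j).factorial)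

/-- The inner product on `L²(ΩT₀,τ)_fin ⊗ S_{ΩT₀,fin}`. -/
noncomputable def innH (φ ψ : HSp) : ℂ :=
  ∑ b ∈ φ.support ∪ ψ.support, (wt b : ℂ) * conj (φ b) * ψ b

section Aux

open Finsupp Finset

/-! ### sign lemmas -/

lemma ksgn_sq (n : ℕ) (s : Finset ℕ) : ksgn n s * ksgn n s = 1 := by
  rw [ksgn, ← mul_pow]; norm_num

lemma ksgn_insert {n : ℕ} (s : Finset ℕ) (h : n ∉ s) (m : ℕ) (hne : m ≠ n) :
    ksgn m (insert n s) = (if n < m then (-1 : ℂ) else 1) * ksgn m s := by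
  unfold ksgn
  rw [Finset.filter_insert]
  by_cases h1 : n < m
  · rw [if_pos h1, if_pos h1,
      Finset.card_insert_of_notMem (fun hc => h (Finset.mem_filter.mp hc).1), pow_succ]
    ring
  · rw [if_neg h1, if_neg h1, one_mul]

lemma ksgn_erase {n : ℕ} {s : Finset ℕ} (h : n ∈ s) (m : ℕ) (hne : m ≠ n) :
    ksgn m (s.erase n) = (if n < m then (-1 : ℂ) else 1) * ksgn m s := by
  have h2 : n ∉ s.erase n := Finset.notMem_erase n s
  have h3 := ksgn_insert (s.erase n) h2 m hne
  rw [Finset.insert_erase h] at h3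
  rw [h3]
  split_ifs <;> ring

lemma ksgn_erase_self {n : ℕ} {s : Finset ℕ} : ksgn n (s.erase n) = ksgn n s := by
  unfold ksgn
  rw [Finset.filter_erase, Finset.erase_eq_of_notMem]
  simp

lemma ksgn_insert_self {n : ℕ} {s : Finset ℕ} (h : n ∉ s) : ksgn n (insert n s) = ksgn n s := by
  unfold ksgn
  rw [Finset.filter_insert, if_neg (lt_irrefl n)]

end Aux
noncomputable def cf (n : ℕ) (b : TripleBasis) : ℂ :=
  if n ∈ b.2.2 then ((Real.sqrt n : ℝ) : ℂ) * ((Real.sqrt 2 : ℝ) : ℂ) * ksgn n b.2.2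
  else ((Real.sqrt n : ℝ) : ℂ) * ((Real.sqrt 2 : ℝ) : ℂ) * ksgn n b.2.2 * (b.2.1 n : ℂ)

noncomputable def nxt (n : ℕ) (b : TripleBasis) : TripleBasis :=
  if n ∈ b.2.2 then (b.1, b.2.1 + Finsupp.single n 1, b.2.2.erase n)
  else (b.1, b.2.1 - Finsupp.single n 1, insert n b.2.2)

noncomputable def Tn (n : ℕ) (b : TripleBasis) : HSp :=
  (Real.sqrt n : ℂ) • (dstarZbar n (GammaZ n (Finsupp.single b 1)) +
    dstarZ n (GammaZbar n (Finsupp.single b 1)))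

lemma Tn_eq (n : ℕ) (b : TripleBasis) : Tn n b = cf n b • Finsupp.single (nxt n b) 1 := by
  obtain ⟨p, q, s⟩ := b
  by_cases h : n ∈ s
  · simp only [Tn, cf, nxt, GammaZ, GammaZbar, dstarZ, dstarZbar, Finsupp.lsum_single,
      LinearMap.toSpanSingleton_apply, if_pos h, one_smul, map_smul, map_zero, add_zero,
      smul_smul]
    congr 1
    ring
  · simp only [Tn, cf, nxt, GammaZ, GammaZbar, dstarZ, dstarZbar, Finsupp.lsum_single,
      LinearMap.toSpanSingleton_apply, if_neg h, one_smul, map_smul, map_zero, zero_add,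
      smul_smul]
    congr 1
    ring

lemma Tn_zero {n : ℕ} {b : TripleBasis} (h : n ∉ b.2.1.support ∪ b.2.2) : Tn n b = 0 := by
  rw [Tn_eq]
  have h1 : n ∉ b.2.2 := fun hc => h (Finset.mem_union_right _ hc)
  have h2 : b.2.1 n = 0 := by
    have := fun hc => h (Finset.mem_union_left _ hc)
    simpa [Finsupp.mem_support_iff] using this
  rw [cf, if_neg h1, h2]
  simp

lemma DiracR_single (b : TripleBasis) :
    DiracR (Finsupp.single b 1) = ∑ n ∈ b.2.1.support ∪ b.2.2, Tn n b := by
  rw [DiracR, Finsupp.lsum_single, LinearMap.toSpanSingleton_apply, one_smul]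
  rfl

lemma DiracR_single' (b : TripleBasis) (V : Finset ℕ) (hV : b.2.1.support ∪ b.2.2 ⊆ V) :
    DiracR (Finsupp.single b 1) = ∑ n ∈ V, Tn n b := by
  rw [DiracR_single]
  exact Finset.sum_subset hV (fun n _ hn => Tn_zero hn)
lemma fs_add_sub (q : ℕ →₀ ℕ) (n : ℕ) : q + Finsupp.single n 1 - Finsupp.single n 1 = q := by
  ext a; simp [Finsupp.tsub_apply, Finsupp.single_apply]

lemma fs_sub_add {q : ℕ →₀ ℕ} {n : ℕ} (h : q n ≠ 0) :
    q - Finsupp.single n 1 + Finsupp.single n 1 = q := by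
  ext a
  simp only [Finsupp.add_apply, Finsupp.tsub_apply, Finsupp.single_apply]
  split_ifs with h1
  · subst h1; omega
  · omega

lemma fs_add_sub_comm (q : ℕ →₀ ℕ) {n m : ℕ} (hne : n ≠ m) :
    q + Finsupp.single n 1 - Finsupp.single m 1 = q - Finsupp.single m 1 + Finsupp.single n 1 := by
  ext a
  simp only [Finsupp.add_apply, Finsupp.tsub_apply, Finsupp.single_apply]
  split_ifs with h1 h2 <;> omega

lemma fs_sub_sub_comm (q : ℕ →₀ ℕ) (n m : ℕ) :
    q - Finsupp.single n 1 - Finsupp.single m 1 = q - Finsupp.single m 1 - Finsupp.single n 1 := by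
  ext a
  simp only [Finsupp.tsub_apply]
  omega

lemma fs_add_apply_self (q : ℕ →₀ ℕ) (n : ℕ) : ((q + Finsupp.single n 1 : ℕ →₀ ℕ) : ℕ → ℕ) n = q n + 1 := by
  simp

lemma fs_add_apply_ne (q : ℕ →₀ ℕ) {n m : ℕ} (h : m ≠ n) :
    ((q + Finsupp.single n 1 : ℕ →₀ ℕ) : ℕ → ℕ) m = q m := by
  simp [Finsupp.single_apply, h.symm, Finsupp.single_eq_of_ne (Ne.symm h)]

lemma fs_sub_apply_ne (q : ℕ →₀ ℕ) {n m : ℕ} (h : m ≠ n) :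
    ((q - Finsupp.single n 1 : ℕ →₀ ℕ) : ℕ → ℕ) m = q m := by
  simp [Finsupp.tsub_apply, Finsupp.single_eq_of_ne' (Ne.symm h)]

lemma U_nxt_subset {n : ℕ} {b : TripleBasis} (h : n ∈ b.2.1.support ∪ b.2.2) :
    (nxt n b).2.1.support ∪ (nxt n b).2.2 ⊆ b.2.1.support ∪ b.2.2 := by
  obtain ⟨p, q, s⟩ := b
  by_cases hs : n ∈ s
  · rw [nxt, if_pos hs]
    intro a ha
    rcases Finset.mem_union.mp ha with ha | ha
    · rcases Finset.mem_union.mp (Finsupp.support_add ha) with ha | ha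
      · exact Finset.mem_union_left _ ha
      · have : a = n := by simpa using Finsupp.support_single_subset ha
        exact Finset.mem_union_right _ (this ▸ hs)
    · exact Finset.mem_union_right _ (Finset.mem_of_mem_erase ha)
  · rw [nxt, if_neg hs]
    intro a ha
    rcases Finset.mem_union.mp ha with ha | ha
    · exact Finset.mem_union_left _ (Finsupp.support_tsub ha)
    · rcases Finset.mem_insert.mp ha with rfl | ha
      · exact h
      · exact Finset.mem_union_right _ ha
lemma sqrtC_sq (n : ℕ) : ((Real.sqrt n : ℝ) : ℂ) ^ 2 = (n : ℂ) := by
  rw [sq, ← Complex.ofReal_mul, Real.mul_self_sqrt (Nat.cast_nonneg n)]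
  simp

lemma sqrt2C_sq : ((Real.sqrt 2 : ℝ) : ℂ) ^ 2 = 2 := by
  rw [sq, ← Complex.ofReal_mul, Real.mul_self_sqrt (by norm_num : (2:ℝ) ≥ 0)]
  norm_num

lemma ksgn_sq' (n : ℕ) (s : Finset ℕ) : (ksgn n s) ^ 2 = 1 := by rw [sq, ksgn_sq]

lemma nxt_mem {n : ℕ} {p q s} (h : n ∈ s) :
    nxt n (p, q, s) = (p, q + Finsupp.single n 1, s.erase n) := by rw [nxt, if_pos h]

lemma nxt_not_mem {n : ℕ} {p q s} (h : n ∉ s) :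
    nxt n (p, q, s) = (p, q - Finsupp.single n 1, insert n s) := by rw [nxt, if_neg h]

lemma cf_mem {n : ℕ} {p q s} (h : n ∈ s) :
    cf n (p, q, s) = ((Real.sqrt n : ℝ) : ℂ) * ((Real.sqrt 2 : ℝ) : ℂ) * ksgn n s := by
  rw [cf, if_pos h]

lemma cf_not_mem {n : ℕ} {p q s} (h : n ∉ s) :
    cf n (p, q, s) = ((Real.sqrt n : ℝ) : ℂ) * ((Real.sqrt 2 : ℝ) : ℂ) * ksgn n s * (q n : ℂ) := by
  rw [cf, if_neg h]

lemma step_diag {n : ℕ} {p q : ℕ →₀ ℕ} {s : Finset ℕ} (hU : n ∈ q.support ∪ s) :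
    cf n (p, q, s) • (cf n (nxt n (p, q, s)) • Finsupp.single (nxt n (nxt n (p, q, s))) 1) =
      ((2 * n * (q n + if n ∈ s then 1 else 0) : ℕ) : ℂ) • (Finsupp.single (p, q, s) 1 : HSp) := by
  by_cases hs : n ∈ s
  · rw [nxt_mem hs]
    have h1 : n ∉ s.erase n := Finset.notMem_erase n s
    rw [nxt_not_mem h1, cf_not_mem h1, cf_mem hs, fs_add_sub, Finset.insert_erase hs,
      ksgn_erase_self, fs_add_apply_self, if_pos hs, smul_smul]
    congr 1
    push_cast
    linear_combination
      (((Real.sqrt 2 : ℝ) : ℂ)^2 * (ksgn n s)^2 * ((q n : ℂ) + 1)) * sqrtC_sq n +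
      ((n : ℂ) * (ksgn n s)^2 * ((q n : ℂ) + 1)) * sqrt2C_sq +
      (2 * (n : ℂ) * ((q n : ℂ) + 1)) * ksgn_sq' n s
  · have hq : q n ≠ 0 := by
      rcases Finset.mem_union.mp hU with h | h
      · exact Finsupp.mem_support_iff.mp h
      · exact absurd h hs
    rw [nxt_not_mem hs]
    have h1 : n ∈ insert n s := Finset.mem_insert_self n s
    rw [nxt_mem h1, cf_mem h1, cf_not_mem hs, fs_sub_add hq, Finset.erase_insert hs,
      ksgn_insert_self hs, if_neg hs, smul_smul]
    congr 1
    push_cast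
    linear_combination
      (((Real.sqrt 2 : ℝ) : ℂ)^2 * (ksgn n s)^2 * (q n : ℂ)) * sqrtC_sq n +
      ((n : ℂ) * (ksgn n s)^2 * (q n : ℂ)) * sqrt2C_sq +
      (2 * (n : ℂ) * (q n : ℂ)) * ksgn_sq' n s
lemma step_anti_mixed {p} {q : ℕ →₀ ℕ} {s : Finset ℕ} {n m : ℕ}
    (hn : n ∈ s) (hm : m ∉ s) (hne : n ≠ m) :
    cf n (p, q, s) • (cf m (nxt n (p, q, s)) • Finsupp.single (nxt m (nxt n (p, q, s))) 1) +
      cf m (p, q, s) • (cf n (nxt m (p, q, s)) • Finsupp.single (nxt n (nxt m (p, q, s))) 1)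
      = (0 : HSp) := by
  have hm' : m ∉ s.erase n := fun hc => hm (Finset.mem_of_mem_erase hc)
  have hn' : n ∈ insert m s := Finset.mem_insert_of_mem hn
  rw [nxt_mem hn, nxt_not_mem hm, nxt_not_mem hm', nxt_mem hn', cf_mem hn, cf_not_mem hm,
    cf_not_mem hm', cf_mem hn', fs_add_apply_ne q hne.symm, fs_add_sub_comm q hne,
    Finset.erase_insert_of_ne hne.symm, smul_smul, smul_smul, ← add_smul,
    ksgn_erase hn m (Ne.symm hne), ksgn_insert s hm n hne]
  rcases hne.lt_or_gt with h | h
  · rw [if_pos h, if_neg (asymm h), show ∀ x y : ℂ, x = y → x • (Finsupp.single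
      (p, q - Finsupp.single m 1 + Finsupp.single n 1, insert m (s.erase n)) 1 : HSp) =
      y • _ from fun x y hxy => by rw [hxy]]
    · exact zero_smul ℂ _
    · ring
  · rw [if_neg (asymm h), if_pos h, show ∀ x y : ℂ, x = y → x • (Finsupp.single
      (p, q - Finsupp.single m 1 + Finsupp.single n 1, insert m (s.erase n)) 1 : HSp) =
      y • _ from fun x y hxy => by rw [hxy]]
    · exact zero_smul ℂ _
    · ring
lemma step_antisymm {b : TripleBasis} {n m : ℕ} (hne : n ≠ m) :
    cf n b • (cf m (nxt n b) • Finsupp.single (nxt m (nxt n b)) 1) +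
      cf m b • (cf n (nxt m b) • Finsupp.single (nxt n (nxt m b)) 1) = (0 : HSp) := by
  obtain ⟨p, q, s⟩ := b
  by_cases hn : n ∈ s <;> by_cases hm : m ∈ s
  · -- both in s
    have hm' : m ∈ s.erase n := Finset.mem_erase.mpr ⟨Ne.symm hne, hm⟩
    have hn' : n ∈ s.erase m := Finset.mem_erase.mpr ⟨hne, hn⟩
    rw [nxt_mem hn, nxt_mem hm, nxt_mem hm', nxt_mem hn', cf_mem hn, cf_mem hm, cf_mem hm',
      cf_mem hn', ksgn_erase hn m (Ne.symm hne), ksgn_erase hm n hne,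
      show q + Finsupp.single m 1 + Finsupp.single n 1 =
        q + Finsupp.single n 1 + Finsupp.single m 1 from add_right_comm _ _ _,
      Finset.erase_right_comm (a := m) (b := n), smul_smul, smul_smul, ← add_smul]
    suffices h : (((Real.sqrt n : ℝ) : ℂ) * ((Real.sqrt 2 : ℝ) : ℂ) * ksgn n s *
        (((Real.sqrt m : ℝ) : ℂ) * ((Real.sqrt 2 : ℝ) : ℂ) *
          ((if n < m then (-1:ℂ) else 1) * ksgn m s)) +
        ((Real.sqrt m : ℝ) : ℂ) * ((Real.sqrt 2 : ℝ) : ℂ) * ksgn m s *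
        (((Real.sqrt n : ℝ) : ℂ) * ((Real.sqrt 2 : ℝ) : ℂ) *
          ((if m < n then (-1:ℂ) else 1) * ksgn n s))) = 0 by rw [h, zero_smul]
    rcases hne.lt_or_gt with h | h
    · rw [if_pos h, if_neg (asymm h)]; ring
    · rw [if_neg (asymm h), if_pos h]; ring
  · exact step_anti_mixed hn hm hne
  · rw [add_comm]; exact step_anti_mixed hm hn (Ne.symm hne)
  · -- both not in s
    have hm' : m ∉ insert n s := by
      simp only [Finset.mem_insert]; rintro (rfl | h); exact hne rfl; exact hm h
    have hn' : n ∉ insert m s := by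
      simp only [Finset.mem_insert]; rintro (rfl | h); exact hne rfl; exact hn h
    rw [nxt_not_mem hn, nxt_not_mem hm, nxt_not_mem hm', nxt_not_mem hn', cf_not_mem hn,
      cf_not_mem hm, cf_not_mem hm', cf_not_mem hn', fs_sub_apply_ne q hne.symm,
      fs_sub_apply_ne q hne, fs_sub_sub_comm, Finset.insert_comm,
      ksgn_insert s hn m (Ne.symm hne), ksgn_insert s hm n hne, smul_smul, smul_smul, ← add_smul]
    suffices h : (((Real.sqrt n : ℝ) : ℂ) * ((Real.sqrt 2 : ℝ) : ℂ) * ksgn n s * (q n : ℂ) *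
        (((Real.sqrt m : ℝ) : ℂ) * ((Real.sqrt 2 : ℝ) : ℂ) *
          ((if n < m then (-1:ℂ) else 1) * ksgn m s) * (q m : ℂ)) +
        ((Real.sqrt m : ℝ) : ℂ) * ((Real.sqrt 2 : ℝ) : ℂ) * ksgn m s * (q m : ℂ) *
        (((Real.sqrt n : ℝ) : ℂ) * ((Real.sqrt 2 : ℝ) : ℂ) *
          ((if m < n then (-1:ℂ) else 1) * ksgn n s) * (q n : ℂ))) = 0 by rw [h, zero_smul]
    rcases hne.lt_or_gt with h | h
    · rw [if_pos h, if_neg (asymm h)]; ring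
    · rw [if_neg (asymm h), if_pos h]; ring
lemma sum_sum_antisymm (U : Finset ℕ) (F : ℕ → ℕ → HSp)
    (h : ∀ n m : ℕ, n ≠ m → F n m + F m n = 0) :
    ∑ n ∈ U, ∑ m ∈ U, F n m = ∑ n ∈ U, F n n := by
  have split : ∑ n ∈ U, ∑ m ∈ U, F n m =
      ∑ n ∈ U, F n n + ∑ n ∈ U, ∑ m ∈ U.erase n, F n m := by
    rw [← Finset.sum_add_distrib]
    exact Finset.sum_congr rfl fun n hn => (Finset.add_sum_erase _ _ hn).symm
  have hswap : ∑ n ∈ U, ∑ m ∈ U.erase n, F n m = ∑ n ∈ U, ∑ m ∈ U.erase n, F m n := by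
    rw [Finset.sum_comm' (s' := fun m => U.erase m) (t' := U)]
    intro x y
    simp only [Finset.mem_erase]
    tauto
  have hzero : ∑ n ∈ U, ∑ m ∈ U.erase n, F n m = 0 := by
    have h2 : (∑ n ∈ U, ∑ m ∈ U.erase n, F n m) + (∑ n ∈ U, ∑ m ∈ U.erase n, F n m) = 0 := by
      nth_rewrite 2 [hswap]
      rw [← Finset.sum_add_distrib]
      refine Finset.sum_eq_zero fun n hn => ?_
      rw [← Finset.sum_add_distrib]
      exact Finset.sum_eq_zero fun m hm => h n m (Ne.symm (Finset.mem_erase.mp hm).1)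
    have h3 : (2 : ℂ) • (∑ n ∈ U, ∑ m ∈ U.erase n, F n m) = 0 := by
      rw [two_smul]; exact h2
    simpa using (smul_eq_zero.mp h3).resolve_left (by norm_num)
  rw [split, hzero, add_zero]

lemma DD_single (p : ℕ →₀ ℕ) (q : ℕ →₀ ℕ) (s : Finset ℕ) :
    DiracR (DiracR (Finsupp.single (p, q, s) 1)) =
      ((2 * (∑ j ∈ s, j + ∑ j ∈ q.support, j * q j) : ℕ) : ℂ) •
        (Finsupp.single (p, q, s) 1 : HSp) := by
  rw [DiracR_single, map_sum]
  have h1 : ∀ n ∈ q.support ∪ s, DiracR (Tn n (p, q, s)) =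
      ∑ m ∈ q.support ∪ s, cf n (p, q, s) • (cf m (nxt n (p, q, s)) •
        Finsupp.single (nxt m (nxt n (p, q, s))) 1) := by
    intro n hn
    rw [Tn_eq, map_smul, DiracR_single' _ _ (U_nxt_subset hn), Finset.smul_sum]
    exact Finset.sum_congr rfl fun m _ => by rw [Tn_eq]
  rw [show ((p, q, s) : TripleBasis).2.1.support ∪ ((p, q, s) : TripleBasis).2.2 =
    q.support ∪ s from rfl, Finset.sum_congr rfl h1,
    sum_sum_antisymm _ _ (fun n m hne => step_antisymm hne)]
  have h2 : ∀ n ∈ q.support ∪ s,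
      cf n (p, q, s) • (cf n (nxt n (p, q, s)) • Finsupp.single (nxt n (nxt n (p, q, s))) 1) =
      ((2 * n * (q n + if n ∈ s then 1 else 0) : ℕ) : ℂ) • (Finsupp.single (p, q, s) 1 : HSp) :=
    fun n hn => step_diag hn
  rw [Finset.sum_congr rfl h2, ← Finset.sum_smul, ← Nat.cast_sum]
  congr 2
  have hs : s ⊆ q.support ∪ s := Finset.subset_union_right
  have expand : ∑ n ∈ q.support ∪ s, 2 * n * (q n + if n ∈ s then 1 else 0) =
      (∑ n ∈ q.support ∪ s, 2 * (n * q n)) + ∑ n ∈ q.support ∪ s, (if n ∈ s then 2 * n else 0) := by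
    rw [← Finset.sum_add_distrib]
    refine Finset.sum_congr rfl fun n _ => ?_
    split_ifs <;> ring
  rw [expand]
  have e1 : ∑ n ∈ q.support ∪ s, 2 * (n * q n) = 2 * ∑ j ∈ q.support, j * q j := by
    rw [← Finset.mul_sum]
    congr 1
    refine (Finset.sum_subset Finset.subset_union_left fun n _ hn => ?_).symm
    rw [Finsupp.notMem_support_iff.mp fun hc => hn (Finsupp.mem_support_iff.mpr
      (Finsupp.mem_support_iff.mp hc))]
    ring
  have e2 : ∑ n ∈ q.support ∪ s, (if n ∈ s then 2 * n else 0) = 2 * ∑ j ∈ s, j := by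
    rw [Finset.sum_ite_mem, Finset.inter_eq_right.mpr hs, Finset.mul_sum]
  rw [e1, e2]
  ring
lemma NopH_single (b : TripleBasis) :
    NopH (Finsupp.single b 1) = ((∑ j ∈ b.2.2, j : ℕ) : ℂ) • (Finsupp.single b 1 : HSp) := by
  rw [NopH, Finsupp.lsum_single, LinearMap.toSpanSingleton_apply, one_smul]

lemma EopH_single (b : TripleBasis) :
    EopH (Finsupp.single b 1) =
      ((∑ j ∈ b.2.1.support, j * b.2.1 j : ℕ) : ℂ) • (Finsupp.single b 1 : HSp) := by
  rw [EopH, Finsupp.lsum_single, LinearMap.toSpanSingleton_apply, one_smul]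

lemma DD_eq (v : HSp) : DiracR (DiracR v) = (2 : ℂ) • (NopH v + EopH v) := by
  induction v using Finsupp.induction_linear with
  | zero => simp
  | add f g hf hg => simp only [map_add, hf, hg, smul_add]; abel
  | single a c =>
    have hc : (Finsupp.single a c : HSp) = c • Finsupp.single a 1 := by
      rw [Finsupp.smul_single, smul_eq_mul, mul_one]
    obtain ⟨p, q, s⟩ := a
    rw [hc, map_smul, map_smul, map_smul, map_smul, DD_single, NopH_single, EopH_single,
      smul_smul, smul_smul, smul_smul, ← add_smul, smul_smul]
    congr 1
    push_cast
    ring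

lemma lsum_diag_apply (d : TripleBasis → ℂ) (v : HSp) (c : TripleBasis) :
    (Finsupp.lsum ℂ fun b => LinearMap.toSpanSingleton ℂ HSp (d b • Finsupp.single b 1)) v c
      = d c * v c := by
  classical
  rw [Finsupp.lsum_apply, Finsupp.sum_apply, Finsupp.sum]
  simp only [LinearMap.toSpanSingleton_apply, Finsupp.smul_apply, Finsupp.single_apply,
    smul_eq_mul, mul_ite, mul_one, mul_zero]
  rw [Finset.sum_ite_eq' v.support c (fun b => v b * d b)]
  split_ifs with h
  · ring
  · rw [Finsupp.notMem_support_iff.mp h]; ring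

lemma NopH_apply (v : HSp) (c : TripleBasis) :
    NopH v c = ((∑ j ∈ c.2.2, j : ℕ) : ℂ) * v c :=
  lsum_diag_apply (fun b => ((∑ j ∈ b.2.2, j : ℕ) : ℂ)) v c

lemma EopH_apply (v : HSp) (c : TripleBasis) :
    EopH v c = ((∑ j ∈ c.2.1.support, j * c.2.1 j : ℕ) : ℂ) * v c :=
  lsum_diag_apply (fun b => ((∑ j ∈ b.2.1.support, j * b.2.1 j : ℕ) : ℂ)) v c

lemma innH_diag_nonneg (d : TripleBasis → ℕ) (v w : HSp) (h : ∀ b, w b = (d b : ℂ) * v b) :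
    0 ≤ (innH v w).re ∧ (innH v w).im = 0 := by
  have key : innH v w = ((∑ b ∈ v.support ∪ w.support,
      (wt b : ℝ) * (d b : ℝ) * Complex.normSq (v b) : ℝ) : ℂ) := by
    rw [innH, Complex.ofReal_sum]
    refine Finset.sum_congr rfl fun b _ => ?_
    rw [h b, show (wt b : ℂ) * conj (v b) * ((d b : ℂ) * v b)
        = (wt b : ℂ) * (d b : ℂ) * (v b * conj (v b)) from by ring, Complex.mul_conj]
    push_cast
    ring
  refine ⟨?_, by rw [key, Complex.ofReal_im]⟩
  rw [key, Complex.ofReal_re]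
  exact Finset.sum_nonneg fun b _ =>
    mul_nonneg (mul_nonneg (Nat.cast_nonneg _) (Nat.cast_nonneg _)) (Complex.normSq_nonneg _)

/-- the Weitzenböck-type formula
`D_R² = 2(id ⊗ id ⊗ N + id ⊗ (dρ*(d)/i) ⊗ id)`, where `dρ*(d)/i` is positive
semi-definite; in particular `D_R²` is positive semi-definite. -/
theorem stmt14 :
    (∀ v : HSp, DiracR (DiracR v) = (2 : ℂ) • (NopH v + EopH v)) ∧
    (∀ v : HSp, 0 ≤ (innH v (EopH v)).re ∧ (innH v (EopH v)).im = 0) ∧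
    (∀ v : HSp, 0 ≤ (innH v (DiracR (DiracR v))).re ∧
      (innH v (DiracR (DiracR v))).im = 0) := by
  refine ⟨DD_eq, ?_, ?_⟩
  · intro v
    exact innH_diag_nonneg (fun b => ∑ j ∈ b.2.1.support, j * b.2.1 j) v (EopH v)
      (fun b => EopH_apply v b)
  · intro v
    refine innH_diag_nonneg
      (fun b => 2 * ((∑ j ∈ b.2.2, j) + ∑ j ∈ b.2.1.support, j * b.2.1 j)) v _ (fun b => ?_)
    rw [DD_eq, Finsupp.smul_apply, smul_eq_mul, Finsupp.add_apply, NopH_apply, EopH_apply]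
    push_cast
    ring
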